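/- Let (R_i), i = 1,…,n, be a profile on a finite set X and let α be a real number with 1/2 < α ≤ n/(2n−1). Then for all x, y ∈ X the following are equivalent: (a) x R_α y; (b) p_{xy} > 0 and r_{xy} > r_{yx}; (c) p_{xy} > p_{yx}; (d) x P_α y. In particular, R_α = P_α for all such α. -/

import Mathlib

namespace SC

variable {X : Type*}

/-- `r_{ab}`: the number of individuals `i` with `a R_i b`. -/
noncomputable def rr {n : ℕ} (R : Fin n → X → X → Prop) (a b : X) : ℕ :=
  Nat.card {i : Fin n // R i a b}

/-- `p_{ab}`: the number of individuals `i` with `a P_i b` (strict preference). -/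
noncomputable def pp {n : ℕ} (R : Fin n → X → X → Prop) (a b : X) : ℕ :=
  Nat.card {i : Fin n // R i a b ∧ ¬ R i b a}

/-- `e_{ab}`: the number of individuals `i` with `a E_i b` (equivalence). -/
noncomputable def ee {n : ℕ} (R : Fin n → X → X → Prop) (a b : X) : ℕ :=
  Nat.card {i : Fin n // R i a b ∧ R i b a}

/-- `u_{ab}`: the number of individuals `i` undecided about `a, b`. -/
noncomputable def uu {n : ℕ} (R : Fin n → X → X → Prop) (a b : X) : ℕ :=
  Nat.card {i : Fin n // ¬ R i a b ∧ ¬ R i b a}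

/-- `d_{ab} = p_{ab} + p_{ba} + e_{ab}`. -/
noncomputable def dd {n : ℕ} (R : Fin n → X → X → Prop) (a b : X) : ℕ :=
  pp R a b + pp R b a + ee R a b

/-- `d_S`: the number of individuals with some strict preference within `S`. -/
noncomputable def dS {n : ℕ} (R : Fin n → X → X → Prop) (S : Set X) : ℕ :=
  Nat.card {i : Fin n // ∃ a ∈ S, ∃ b ∈ S, R i a b ∧ ¬ R i b a}

/-- `x M_α y  :⟺  p_{xy} ≥ α n`. -/
def Mrel {n : ℕ} (R : Fin n → X → X → Prop) (α : ℝ) (a b : X) : Prop :=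
  (pp R a b : ℝ) ≥ α * (n : ℝ)

/-- `x N_α y  :⟺  r_{xy} ≥ α n`. -/
def Nrel {n : ℕ} (R : Fin n → X → X → Prop) (α : ℝ) (a b : X) : Prop :=
  (rr R a b : ℝ) ≥ α * (n : ℝ)

/-- `x M^S_α y  :⟺  p_{xy} ≥ α d_S > 0`. -/
def MSrel {n : ℕ} (R : Fin n → X → X → Prop) (α : ℝ) (S : Set X) (a b : X) : Prop :=
  (pp R a b : ℝ) ≥ α * (dS R S : ℝ) ∧ 0 < α * (dS R S : ℝ)

/-- `x N^S_α y  :⟺  r_{xy} ≥ α d_S > 0`. -/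
def NSrel {n : ℕ} (R : Fin n → X → X → Prop) (α : ℝ) (S : Set X) (a b : X) : Prop :=
  (rr R a b : ℝ) ≥ α * (dS R S : ℝ) ∧ 0 < α * (dS R S : ℝ)

/-- `x B_α y  :⟺  p_{xy} ≥ α d_{xy} > 0`. -/
def Brel {n : ℕ} (R : Fin n → X → X → Prop) (α : ℝ) (a b : X) : Prop :=
  (pp R a b : ℝ) ≥ α * (dd R a b : ℝ) ∧ 0 < α * (dd R a b : ℝ)

/-- `x D_α y  :⟺  r_{xy} ≥ α d_{xy} > 0`. -/
def Drel {n : ℕ} (R : Fin n → X → X → Prop) (α : ℝ) (a b : X) : Prop :=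
  (rr R a b : ℝ) ≥ α * (dd R a b : ℝ) ∧ 0 < α * (dd R a b : ℝ)

/-- `x P_α y  :⟺  p_{xy} ≥ α (p_{xy} + p_{yx}) > 0`. -/
def Prel {n : ℕ} (R : Fin n → X → X → Prop) (α : ℝ) (a b : X) : Prop :=
  (pp R a b : ℝ) ≥ α * ((pp R a b : ℝ) + (pp R b a : ℝ)) ∧
    0 < α * ((pp R a b : ℝ) + (pp R b a : ℝ))

/-- `x R_α y  :⟺  r_{xy} ≥ α (r_{xy} + r_{yx})` and `p_{xy} > 0`. -/
def Rrel {n : ℕ} (R : Fin n → X → X → Prop) (α : ℝ) (a b : X) : Prop :=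
  (rr R a b : ℝ) ≥ α * ((rr R a b : ℝ) + (rr R b a : ℝ)) ∧ 0 < pp R a b

/-- `x U_α y  :⟺  p_{xy} > p_{yx}` and `p_{xy} + u_{xy} ≥ α n`. -/
def Urel {n : ℕ} (R : Fin n → X → X → Prop) (α : ℝ) (a b : X) : Prop :=
  pp R b a < pp R a b ∧ ((pp R a b : ℝ) + (uu R a b : ℝ)) ≥ α * (n : ℝ)

/-- `x E_α y  :⟺  p_{xy} > p_{yx}` and `p_{xy} + e_{xy} ≥ α d_{xy}`. -/
def Erel {n : ℕ} (R : Fin n → X → X → Prop) (α : ℝ) (a b : X) : Prop :=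
  pp R b a < pp R a b ∧ ((pp R a b : ℝ) + (ee R a b : ℝ)) ≥ α * (dd R a b : ℝ)

/-- `tr_S(A)`: the reflexive-transitive hull of the restriction of `A` to `S`. -/
def trS (S : Set X) (A : X → X → Prop) : X → X → Prop :=
  Relation.ReflTransGen (fun a b => a ∈ S ∧ b ∈ S ∧ A a b)

/-- `x` is `tr_S(A)`-optimal. -/
def optimalIn (S : Set X) (A : X → X → Prop) (x : X) : Prop :=
  ∀ y ∈ S, trS S A y x → trS S A x y

lemma ee_comm {n : ℕ} (R : Fin n → X → X → Prop) (a b : X) :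
    ee R a b = ee R b a := by
  unfold ee
  exact Nat.card_congr (Equiv.subtypeEquivRight fun i => and_comm)

lemma rr_eq_pp_add_ee {n : ℕ} (R : Fin n → X → X → Prop) (a b : X) :
    rr R a b = pp R a b + ee R a b := by
  classical
  have h : rr R a b = ({i : Fin n | R i a b} : Set (Fin n)).ncard := rfl
  have hp : pp R a b = ({i : Fin n | R i a b ∧ ¬ R i b a} : Set (Fin n)).ncard := rfl
  have he : ee R a b = ({i : Fin n | R i a b ∧ R i b a} : Set (Fin n)).ncard := rfl
  have hset : ({i : Fin n | R i a b} : Set (Fin n)) =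
      {i : Fin n | R i a b ∧ ¬ R i b a} ∪ {i : Fin n | R i a b ∧ R i b a} := by
    ext i
    simp only [Set.mem_union, Set.mem_setOf_eq]
    tauto
  have hdisj : Disjoint ({i : Fin n | R i a b ∧ ¬ R i b a} : Set (Fin n))
      {i : Fin n | R i a b ∧ R i b a} := by
    rw [Set.disjoint_left]
    rintro i ⟨_, h1⟩ ⟨_, h2⟩
    exact h1 h2
  rw [h, hp, he, hset, Set.ncard_union_eq hdisj (Set.toFinite _) (Set.toFinite _)]

lemma rr_le_n {n : ℕ} (R : Fin n → X → X → Prop) (a b : X) :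
    rr R a b ≤ n := by
  have h : rr R a b = ({i : Fin n | R i a b} : Set (Fin n)).ncard := rfl
  calc rr R a b ≤ (Set.univ : Set (Fin n)).ncard := by
        rw [h]; exact Set.ncard_le_ncard (Set.subset_univ _) (Set.toFinite _)
    _ = n := by rw [Set.ncard_univ]; simp

end SC

open SC in
/-- for `1/2 < α ≤ n/(2n−1)`, the conditions `x R_α y`,
`p_{xy} > 0 ∧ r_{xy} > r_{yx}`, `p_{xy} > p_{yx}`, and `x P_α y` are all equivalent;
in particular `R_α = P_α`. -/
theorem stmt10 {X : Type*} [Fintype X] {n : ℕ} (hn : 1 ≤ n)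
    (R : Fin n → X → X → Prop) (hrefl : ∀ i, Reflexive (R i))
    (α : ℝ) (hα : 1 / 2 < α) (hα2 : α ≤ (n : ℝ) / (2 * (n : ℝ) - 1))
    (x y : X) :
    (Rrel R α x y ↔ (0 < pp R x y ∧ rr R y x < rr R x y)) ∧
    ((0 < pp R x y ∧ rr R y x < rr R x y) ↔ pp R y x < pp R x y) ∧
    ((pp R y x < pp R x y) ↔ Prel R α x y) ∧
    (Rrel R α x y ↔ Prel R α x y) := by
  have h1 : rr R x y = pp R x y + ee R x y := rr_eq_pp_add_ee R x y
  have h2 : rr R y x = pp R y x + ee R x y := by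
    rw [rr_eq_pp_add_ee R y x, ee_comm R y x]
  have h3 : rr R x y ≤ n := rr_le_n R x y
  set p := pp R x y with hp
  set q := pp R y x with hq
  set e := ee R x y with he
  have hα2' : α * (2 * (n : ℝ) - 1) ≤ n := by
    have hpos : (0 : ℝ) < 2 * (n : ℝ) - 1 := by
      have : (1 : ℝ) ≤ n := by exact_mod_cast hn
      linarith
    calc α * (2 * (n : ℝ) - 1) ≤ (n / (2 * (n : ℝ) - 1)) * (2 * (n : ℝ) - 1) := by
          apply mul_le_mul_of_nonneg_right hα2 hpos.le
      _ = n := div_mul_cancel₀ _ hpos.ne'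
  -- (a) → (b)
  have hab : Rrel R α x y → (0 < p ∧ rr R y x < rr R x y) := by
    rintro ⟨hra, hpp⟩
    refine ⟨hpp, ?_⟩
    rw [h1, h2]
    have hPp : (1 : ℝ) ≤ p := by exact_mod_cast hpp
    rw [h1, h2] at hra
    push_cast at hra
    have key : (q : ℝ) < p := by nlinarith
    have : q < p := by exact_mod_cast key
    omega
  -- (b) → (c)
  have hbc : (0 < p ∧ rr R y x < rr R x y) → q < p := by
    rintro ⟨_, hlt⟩
    rw [h1, h2] at hlt
    omega
  -- (c) → (d)
  have hcd : q < p → Prel R α x y := by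
    intro hqp
    have hp1 : (1 : ℝ) ≤ p := by
      have : 0 < p := by omega
      exact_mod_cast this
    have hQP : (q : ℝ) + 1 ≤ p := by exact_mod_cast hqp
    have hpn : p ≤ n := by omega
    have hPN : (p : ℝ) ≤ n := by exact_mod_cast hpn
    constructor
    · have hmono : (2 * α - 1) * ((n : ℝ) - p) ≥ 0 := by
        apply mul_nonneg <;> linarith
      nlinarith
    · have hq0 : (0 : ℝ) ≤ q := by positivity
      nlinarith
  -- (d) → (c)
  have hdc : Prel R α x y → q < p := by
    rintro ⟨hge, hpos⟩
    have hsum : (0 : ℝ) < (p : ℝ) + q := by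
      by_contra hcon
      push_neg at hcon
      nlinarith
    have : (q : ℝ) < p := by nlinarith
    exact_mod_cast this
  -- (c) → (a)
  have hca : q < p → Rrel R α x y := by
    intro hqp
    have hp0 : 0 < p := by omega
    refine ⟨?_, hp0⟩
    rw [h1, h2]
    push_cast
    have hp1 : (1 : ℝ) ≤ p := by exact_mod_cast hp0
    have hQP : (q : ℝ) + 1 ≤ p := by exact_mod_cast hqp
    have hkn : p + e ≤ n := by omega
    have hKN : (p : ℝ) + e ≤ n := by exact_mod_cast hkn
    have he0 : (0 : ℝ) ≤ e := by positivity
    have hmono : (2 * α - 1) * ((n : ℝ) - (p + e)) ≥ 0 := by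
      apply mul_nonneg <;> linarith
    nlinarith
  refine ⟨⟨hab, fun hb => hca (hbc hb)⟩, ⟨hbc, fun hc => hab (hca hc)⟩,
    ⟨hcd, hdc⟩, ⟨fun ha => hcd (hbc (hab ha)), fun hd => hca (hdc hd)⟩⟩
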